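/- For every p, r ∈ ℕ₀ there exists q ∈ ℕ₀ such that for all ξ ∈ s with ‖ξ‖_{ℓ₂} = 1 one has |ξ|_p^r ≤ |ξ|_q. (One may take q = 2^j p for any j ∈ ℕ₀ with r ≤ 2^j.) -/

import Mathlib

noncomputable section

/-- Membership in the space `s` of rapidly decreasing sequences (the paper's index
`j ∈ {1,2,...}` corresponds to `j+1` here). -/
def inS (ξ : ℕ → ℂ) : Prop :=
  ∀ q : ℕ, Summable fun j : ℕ => ‖ξ j‖ ^ 2 * ((j : ℝ) + 1) ^ (2 * q)

/-- The `q`-th norm `|ξ|_q = (∑_j |ξ_j|² (j+1)^(2q))^(1/2)` on `s`;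
`sNorm 0` is the `ℓ₂`-norm. -/
def sNorm (q : ℕ) (ξ : ℕ → ℂ) : ℝ :=
  Real.sqrt (∑' j : ℕ, ‖ξ j‖ ^ 2 * ((j : ℝ) + 1) ^ (2 * q))

lemma sNorm_nonneg (q : ℕ) (ξ : ℕ → ℂ) : 0 ≤ sNorm q ξ := Real.sqrt_nonneg _

lemma tsum_nonneg' (q : ℕ) (ξ : ℕ → ℂ) :
    0 ≤ ∑' j : ℕ, ‖ξ j‖ ^ 2 * ((j : ℝ) + 1) ^ (2 * q) :=
  tsum_nonneg fun j => by positivity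

lemma sq_sNorm (q : ℕ) (ξ : ℕ → ℂ) :
    sNorm q ξ ^ 2 = ∑' j : ℕ, ‖ξ j‖ ^ 2 * ((j : ℝ) + 1) ^ (2 * q) :=
  Real.sq_sqrt (tsum_nonneg' q ξ)

lemma sNorm_mono {p q : ℕ} (h : p ≤ q) {ξ : ℕ → ℂ} (hξ : inS ξ) :
    sNorm p ξ ≤ sNorm q ξ := by
  apply Real.sqrt_le_sqrt
  refine Summable.tsum_le_tsum (fun j => ?_) (hξ p) (hξ q)
  have h1 : (1:ℝ) ≤ (j : ℝ) + 1 := by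
    have := Nat.cast_nonneg (α := ℝ) j; linarith
  have := pow_le_pow_right₀ h1 (Nat.mul_le_mul_left 2 h)
  exact mul_le_mul_of_nonneg_left this (by positivity)

/-- Cauchy–Schwarz: `|ξ|_p² ≤ |ξ|_0 · |ξ|_{2p}`. -/
lemma sq_sNorm_le {p : ℕ} {ξ : ℕ → ℂ} (hξ : inS ξ) :
    sNorm p ξ ^ 2 ≤ sNorm 0 ξ * sNorm (2 * p) ξ := by
  rw [sq_sNorm]
  set a : ℕ → ℝ := fun j => ‖ξ j‖
  set b : ℕ → ℝ := fun j => ‖ξ j‖ * ((j : ℝ) + 1) ^ (2 * p)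
  have hab : ∀ j, ‖ξ j‖ ^ 2 * ((j : ℝ) + 1) ^ (2 * p) = a j * b j := by
    intro j; simp [a, b]; ring
  have ha2 : ∀ j, a j ^ 2 = ‖ξ j‖ ^ 2 * ((j : ℝ) + 1) ^ (2 * 0) := by
    intro j; simp [a]
  have hb2 : ∀ j, b j ^ 2 = ‖ξ j‖ ^ 2 * ((j : ℝ) + 1) ^ (2 * (2 * p)) := by
    intro j; show (‖ξ j‖ * ((j : ℝ) + 1) ^ (2 * p)) ^ 2 = _
    rw [mul_pow, ← pow_mul]; congr 1; ring
  refine Summable.tsum_le_of_sum_le (hξ p) (fun s => ?_)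
  have key := Finset.sum_mul_sq_le_sq_mul_sq s a b
  have h0 : ∑ j ∈ s, a j ^ 2 ≤ sNorm 0 ξ ^ 2 := by
    rw [sq_sNorm]
    refine Summable.sum_le_tsum (L := SummationFilter.unconditional ℕ) s (fun j _ => by positivity) ?_ |>.trans_eq ?_
    · exact (hξ 0).congr fun j => (ha2 j).symm
    · exact tsum_congr fun j => ha2 j
  have h2 : ∑ j ∈ s, b j ^ 2 ≤ sNorm (2 * p) ξ ^ 2 := by
    rw [sq_sNorm]
    refine Summable.sum_le_tsum (L := SummationFilter.unconditional ℕ) s (fun j _ => by positivity) ?_ |>.trans_eq ?_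
    · exact (hξ (2 * p)).congr fun j => (hb2 j).symm
    · exact tsum_congr fun j => hb2 j
  calc ∑ j ∈ s, ‖ξ j‖ ^ 2 * ((j : ℝ) + 1) ^ (2 * p)
      = ∑ j ∈ s, a j * b j := Finset.sum_congr rfl fun j _ => hab j
    _ ≤ Real.sqrt ((∑ j ∈ s, a j ^ 2) * ∑ j ∈ s, b j ^ 2) := by
        have hnn : 0 ≤ ∑ j ∈ s, a j * b j :=
          Finset.sum_nonneg fun j _ =>
            mul_nonneg (norm_nonneg _) (by positivity : (0:ℝ) ≤ b j)
        exact (Real.le_sqrt hnn (mul_nonneg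
          (Finset.sum_nonneg fun j _ => sq_nonneg _)
          (Finset.sum_nonneg fun j _ => sq_nonneg _))).mpr key
    _ ≤ Real.sqrt ((sNorm 0 ξ ^ 2) * (sNorm (2 * p) ξ ^ 2)) := by
        apply Real.sqrt_le_sqrt
        exact mul_le_mul h0 h2 (Finset.sum_nonneg fun j _ => by positivity)
          (by positivity)
    _ = sNorm 0 ξ * sNorm (2 * p) ξ := by
        rw [← mul_pow, Real.sqrt_sq (mul_nonneg (sNorm_nonneg _ _) (sNorm_nonneg _ _))]

lemma pow_two_pow_le {p : ℕ} {ξ : ℕ → ℂ} (hξ : inS ξ) (h0 : sNorm 0 ξ = 1) :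
    ∀ j : ℕ, sNorm p ξ ^ (2 ^ j) ≤ sNorm (2 ^ j * p) ξ := by
  intro j
  induction j with
  | zero => simp
  | succ j ih =>
    have : sNorm p ξ ^ (2 ^ (j + 1)) = (sNorm p ξ ^ (2 ^ j)) ^ 2 := by
      rw [← pow_mul, pow_succ]
    rw [this]
    calc (sNorm p ξ ^ (2 ^ j)) ^ 2 ≤ sNorm (2 ^ j * p) ξ ^ 2 := by
          apply pow_le_pow_left₀ (pow_nonneg (sNorm_nonneg _ _) _) ih
      _ ≤ sNorm 0 ξ * sNorm (2 * (2 ^ j * p)) ξ := sq_sNorm_le hξ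
      _ = sNorm (2 ^ (j + 1) * p) ξ := by
          rw [h0, one_mul]; ring_nf

/-- For every `p, r ∈ ℕ₀` there is `q ∈ ℕ₀` such that `|ξ|_p ^ r ≤ |ξ|_q`
for all `ξ ∈ s` with `‖ξ‖_{ℓ₂} = 1`. -/
theorem stmt_1 (p r : ℕ) :
    ∃ q : ℕ, ∀ ξ : ℕ → ℂ, inS ξ → sNorm 0 ξ = 1 → (sNorm p ξ) ^ r ≤ sNorm q ξ := by
  refine ⟨2 ^ r * p, fun ξ hξ h0 => ?_⟩
  have h1 : 1 ≤ sNorm p ξ := h0 ▸ sNorm_mono (Nat.zero_le p) hξ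
  calc sNorm p ξ ^ r ≤ sNorm p ξ ^ (2 ^ r) :=
        pow_le_pow_right₀ h1 (Nat.lt_two_pow_self (n := r)).le
    _ ≤ sNorm (2 ^ r * p) ξ := pow_two_pow_le hξ h0 r

end
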